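/- Let A, B, C, D be four points in Euclidean 3-space such that the four triangles ABC, ABD, ACD, BCD all have the same area S > 0. Write a = dist B C, b = dist C A, c = dist A B. If dist A D = a, dist B D = b, and dist C D ≠ c, then the four points are coplanar and form a parallelogram with vertices in cyclic order D, B, C, A: the midpoint of the segment DC equals the midpoint of the segment AB, the parallelogram has side lengths a and b, and its diagonals have lengths c and √(2a² + 2b² − c²). -/

import Mathlib

/-- The area of the triangle `XYZ`: half the product of the lengths of the
sides `XY`, `XZ` and the sine of the angle at `X`. -/
noncomputable def triArea (X Y Z : EuclideanSpace ℝ (Fin 3)) : ℝ :=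
  dist X Y * dist X Z * Real.sin (EuclideanGeometry.angle Y X Z) / 2

open InnerProductGeometry in
theorem triArea_sq' (X Y Z : EuclideanSpace ℝ (Fin 3)) :
    (dist X Y * dist X Z * Real.sin (EuclideanGeometry.angle Y X Z))^2 =
      ‖Y - X‖^2 * ‖Z - X‖^2 - (inner ℝ (Y - X) (Z - X) : ℝ)^2 := by
  have h : EuclideanGeometry.angle Y X Z = angle (Y - X) (Z - X) := rfl
  rw [h, dist_eq_norm', dist_eq_norm']
  have h1 := sin_angle_mul_norm_mul_norm (Y - X) (Z - X)
  have hnn : (0:ℝ) ≤ (inner ℝ (Y - X) (Y - X) : ℝ) * (inner ℝ (Z - X) (Z - X) : ℝ)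
      - (inner ℝ (Y - X) (Z - X) : ℝ) * (inner ℝ (Y - X) (Z - X) : ℝ) :=
    sub_nonneg.2 (real_inner_mul_inner_self_le _ _)
  have h2 : (Real.sin (angle (Y - X) (Z - X)) * (‖Y - X‖ * ‖Z - X‖))^2 =
      (inner ℝ (Y - X) (Y - X) : ℝ) * (inner ℝ (Z - X) (Z - X) : ℝ)
      - (inner ℝ (Y - X) (Z - X) : ℝ) * (inner ℝ (Y - X) (Z - X) : ℝ) := by
    rw [h1, Real.sq_sqrt hnn]
  rw [real_inner_self_eq_norm_sq, real_inner_self_eq_norm_sq] at h2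
  nlinarith [h2]

theorem triArea_sq (X Y Z : EuclideanSpace ℝ (Fin 3)) (S : ℝ) (h : triArea X Y Z = S) :
    ‖Y - X‖^2 * ‖Z - X‖^2 - (inner ℝ (Y - X) (Z - X) : ℝ)^2 = 4 * S^2 := by
  have h2 := triArea_sq' X Y Z
  unfold triArea at h
  have hx : dist X Y * dist X Z * Real.sin (EuclideanGeometry.angle Y X Z) = 2 * S := by
    linarith
  rw [← h2, hx]; ring

theorem aux_norm (X Y Z : EuclideanSpace ℝ (Fin 3)) :
    ‖X - Y‖^2 = ‖X - Z‖^2 + ‖Y - Z‖^2 - 2 * (inner ℝ (X - Z) (Y - Z) : ℝ) := by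
  have h : X - Y = (X - Z) - (Y - Z) := by abel
  rw [h, norm_sub_sq_real]; ring

theorem stmt_14 (A B C D : EuclideanSpace ℝ (Fin 3)) (S a b c : ℝ)
    (ha : a = dist B C) (hb : b = dist C A) (hc : c = dist A B)
    (hS : 0 < S)
    (h1 : triArea A B C = S) (h2 : triArea A B D = S)
    (h3 : triArea A C D = S) (h4 : triArea B C D = S)
    (hx : dist A D = a) (hy : dist B D = b) (hz : dist C D ≠ c) :
    Coplanar ℝ ({A, B, C, D} : Set (EuclideanSpace ℝ (Fin 3))) ∧
      midpoint ℝ D C = midpoint ℝ A B ∧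
      dist D B = b ∧ dist B C = a ∧ dist C A = b ∧ dist A D = a ∧
      dist A B = c ∧ dist D C = Real.sqrt (2 * a ^ 2 + 2 * b ^ 2 - c ^ 2) := by
  have e1 : ‖B - A‖^2 * ‖C - A‖^2 - (inner ℝ (B - A) (C - A) : ℝ)^2 = 4 * S^2 :=
    triArea_sq A B C S h1
  have e3 : ‖C - A‖^2 * ‖D - A‖^2 - (inner ℝ (C - A) (D - A) : ℝ)^2 = 4 * S^2 :=
    triArea_sq A C D S h3
  -- dist A D = dist B C
  have hr : ‖D - A‖^2 = ‖B - A‖^2 + ‖C - A‖^2 - 2 * (inner ℝ (B - A) (C - A) : ℝ) := by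
    have h5 : ‖D - A‖ = ‖C - B‖ := by rw [← dist_eq_norm', ← dist_eq_norm', hx, ha]
    have h6 := aux_norm C B A
    rw [real_inner_comm] at h6
    rw [h5, h6]; ring
  -- dist B D = dist C A
  have hβe : ‖D - A‖^2 + ‖B - A‖^2 - 2 * (inner ℝ (B - A) (D - A) : ℝ) = ‖C - A‖^2 := by
    have h5 : ‖D - B‖ = ‖A - C‖ := by rw [← dist_eq_norm', ← dist_eq_norm', hy, hb]
    have h6 := aux_norm D B A
    rw [real_inner_comm] at h6
    have h7 : ‖A - C‖^2 = ‖C - A‖^2 := by rw [norm_sub_rev]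
    rw [h5, h7] at h6
    linarith
  have hCD : ‖D - C‖^2 = ‖D - A‖^2 + ‖C - A‖^2 - 2 * (inner ℝ (C - A) (D - A) : ℝ) := by
    have h6 := aux_norm D C A
    rw [real_inner_comm] at h6
    exact h6
  have hγsq : (inner ℝ (C - A) (D - A) : ℝ)^2
      = (‖C - A‖^2 - (inner ℝ (B - A) (C - A) : ℝ))^2 := by
    linear_combination e1 - e3 + ‖C - A‖^2 * hr
  have hγ : (inner ℝ (C - A) (D - A) : ℝ) = (inner ℝ (B - A) (C - A) : ℝ) - ‖C - A‖^2 := by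
    have hfac : ((inner ℝ (C - A) (D - A) : ℝ) - (‖C - A‖^2 - (inner ℝ (B - A) (C - A) : ℝ)))
        * ((inner ℝ (C - A) (D - A) : ℝ) + (‖C - A‖^2 - (inner ℝ (B - A) (C - A) : ℝ))) = 0 := by
      linear_combination hγsq
    rcases mul_eq_zero.mp hfac with h | h
    · exfalso
      apply hz
      have hdd : ‖D - C‖^2 = ‖B - A‖^2 := by linarith
      have hn : ‖D - C‖ = ‖B - A‖ := by
        have := congrArg Real.sqrt hdd
        rwa [Real.sqrt_sq (norm_nonneg _), Real.sqrt_sq (norm_nonneg _)] at this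
      rw [← dist_eq_norm', ← dist_eq_norm'] at hn
      rw [hn, hc]
    · linarith
  -- the key vector identity
  have hw : ‖(D - A) - (B - A) + (C - A)‖^2 = 0 := by
    have i1 : (inner ℝ ((D - A) - (B - A)) (C - A) : ℝ)
        = (inner ℝ (D - A) (C - A) : ℝ) - (inner ℝ (B - A) (C - A) : ℝ) :=
      inner_sub_left _ _ _
    rw [norm_add_sq_real, norm_sub_sq_real, i1,
      real_inner_comm (B - A) (D - A), real_inner_comm (C - A) (D - A)]
    linarith
  have hw0 : (D - A) - (B - A) + (C - A) = 0 :=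
    norm_eq_zero.mp ((pow_eq_zero_iff two_ne_zero).mp hw)
  have hsum : D + C = A + B := by
    apply sub_eq_zero.mp
    rw [show D + C - (A + B) = (D - A) - (B - A) + (C - A) by abel, hw0]
  have hD : D = A + B - C := by rw [eq_sub_iff_add_eq, hsum]
  -- conclusions
  have hset : ({A, B, C, D} : Set (EuclideanSpace ℝ (Fin 3))) = insert D {A, B, C} := by
    ext x; simp only [Set.mem_insert_iff, Set.mem_singleton_iff]; tauto
  have hmem : D ∈ affineSpan ℝ ({A, B, C} : Set (EuclideanSpace ℝ (Fin 3))) := by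
    have hA : A ∈ affineSpan ℝ ({A, B, C} : Set (EuclideanSpace ℝ (Fin 3))) :=
      subset_affineSpan _ _ (by simp)
    have hB : B ∈ affineSpan ℝ ({A, B, C} : Set (EuclideanSpace ℝ (Fin 3))) :=
      subset_affineSpan _ _ (by simp)
    have hC : C ∈ affineSpan ℝ ({A, B, C} : Set (EuclideanSpace ℝ (Fin 3))) :=
      subset_affineSpan _ _ (by simp)
    have hm := AffineSubspace.smul_vsub_vadd_mem (affineSpan ℝ {A, B, C}) (1:ℝ) hB hC hA
    have : D = (1:ℝ) • (B -ᵥ C) +ᵥ A := by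
      rw [hD]; simp only [vsub_eq_sub, vadd_eq_add, one_smul]; abel
    rwa [← this] at hm
  have hcop : Coplanar ℝ ({A, B, C, D} : Set (EuclideanSpace ℝ (Fin 3))) := by
    rw [hset]
    exact (coplanar_insert_iff_of_mem_affineSpan hmem).2 (coplanar_triple (k := ℝ) A B C)
  have hmid : midpoint ℝ D C = midpoint ℝ A B := by
    rw [midpoint_eq_smul_add, midpoint_eq_smul_add, hsum]
  have hDB : dist D B = b := by
    have h0 : D - B = A - C := by rw [hD]; abel
    rw [dist_eq_norm, h0, norm_sub_rev, ← dist_eq_norm, ← hb]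
  have hDC : dist D C = Real.sqrt (2 * a ^ 2 + 2 * b ^ 2 - c ^ 2) := by
    have h5 : dist D C ^ 2 = ‖D - C‖^2 := by rw [dist_eq_norm]
    have ha2 : a^2 = ‖D - A‖^2 := by rw [← hx, dist_eq_norm']
    have hb2 : b^2 = ‖C - A‖^2 := by rw [hb, dist_eq_norm]
    have hc2 : c^2 = ‖B - A‖^2 := by rw [hc, dist_eq_norm']
    have h6 : 2 * a ^ 2 + 2 * b ^ 2 - c ^ 2 = dist D C ^ 2 := by
      rw [h5, hCD, ha2, hb2, hc2, hr, hγ]; ring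
    rw [h6, Real.sqrt_sq dist_nonneg]
  exact ⟨hcop, hmid, hDB, ha.symm, hb.symm, hx, hc.symm, hDC⟩
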